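/- arXiv:2112.12934 — 2 statements merged into one kernel-verified Lean document; each statement's English description precedes it below -/
import Mathlib

section
/- Let Γ ⊊ ℝ^n be an open convex cone with vertex at the origin which is invariant under permutations of the coordinates and contains the positive orthant Γ_n = {λ ∈ ℝ^n : λ_i > 0 for all i}. Then Γ ⊆ {λ ∈ ℝ^n : λ_1 + … + λ_n > 0}. -/
noncomputable section

open Filter Topology Metric Matrix MeasureTheory
open scoped Topology

/-- The quaternions. -/
abbrev Quat : Type := Quaternion ℝ

/-- Real coordinates on `ℍⁿ ≅ ℝ^{4n}`: the coordinate `(r, p)` is `x_p^r`. -/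
abbrev QS (n : ℕ) : Type := (Fin n × Fin 4) → ℝ

/-- The quaternion units `1, i, j, k`. -/
def qunit : Fin 4 → Quat := ![1, ⟨0,1,0,0⟩, ⟨0,0,1,0⟩, ⟨0,0,0,1⟩]

/-- The coefficients `1, -i, -j, -k` appearing in `∂_{q^s}`. -/
def qcunit : Fin 4 → Quat := ![1, ⟨0,-1,0,0⟩, ⟨0,0,-1,0⟩, ⟨0,0,0,-1⟩]

/-- Basis vector of `QS n` corresponding to the coordinate `x_p^r`. -/
def bvec (n : ℕ) (r : Fin n) (p : Fin 4) : QS n := Pi.single (r, p) (1 : ℝ)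

/-- Partial derivative `∂u / ∂x_p^r`. -/
def pd (n : ℕ) (u : QS n → ℝ) (r : Fin n) (p : Fin 4) (x : QS n) : ℝ :=
  fderiv ℝ u x (bvec n r p)

/-- Second partial derivative `∂²u / ∂x_p^r ∂x_q^s`. -/
def pd2 (n : ℕ) (u : QS n → ℝ) (r : Fin n) (p : Fin 4) (s : Fin n) (q : Fin 4) (x : QS n) : ℝ :=
  pd n (pd n u s q) r p x

/-- The quaternionic Hessian `u_{r̄ s} = (1/4) ∂_{q̄ʳ} ∂_{qˢ} u`. -/
def qHess (n : ℕ) (u : QS n → ℝ) (x : QS n) : Matrix (Fin n) (Fin n) Quat :=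
  Matrix.of fun r s =>
    (4 : ℝ)⁻¹ • ∑ p : Fin 4, ∑ q : Fin 4, pd2 n u r p s q x • (qunit p * qcunit q)

/-- The quaternionic Laplacian `Δu = Re tr (Hess_ℍ u)`. -/
def qLap (n : ℕ) (u : QS n → ℝ) (x : QS n) : ℝ := ∑ r, (qHess n u x r r).re

/-- The squared Euclidean norm of the gradient. -/
def gradSq (n : ℕ) (u : QS n → ℝ) (x : QS n) : ℝ := ∑ r, ∑ p, (pd n u r p x) ^ 2

/-- Euclidean norm on `ℝⁿ`. -/
def eNorm {n : ℕ} (lam : Fin n → ℝ) : ℝ := Real.sqrt (∑ i, lam i ^ 2)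

/-- A quaternionic matrix is hyperhermitian if it equals its conjugate transpose. -/
def IsHyperhermitian {n : ℕ} (A : Matrix (Fin n) (Fin n) Quat) : Prop := Aᴴ = A

/-- `lam` is the tuple of (real) eigenvalues of the hyperhermitian matrix `A`:
`A = C⋆ D C` with `C ∈ Sp(n)` and `D = diag lam`. -/
def HasEigenvalues {n : ℕ} (A : Matrix (Fin n) (Fin n) Quat) (lam : Fin n → ℝ) : Prop :=
  ∃ C : Matrix (Fin n) (Fin n) Quat, Cᴴ * C = 1 ∧
    A = Cᴴ * Matrix.diagonal (fun i => algebraMap ℝ Quat (lam i)) * C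

/-- `lam` is the tuple of eigenvalues of `B` relative to the metric `g`
(simultaneous diagonalization). -/
def HasEigenvaluesRel {n : ℕ} (g B : Matrix (Fin n) (Fin n) Quat) (lam : Fin n → ℝ) : Prop :=
  ∃ C : Matrix (Fin n) (Fin n) Quat, IsUnit C ∧ Cᴴ * g * C = 1 ∧
    Cᴴ * B * C = Matrix.diagonal (fun i => algebraMap ℝ Quat (lam i))

/-- The positive orthant `Γₙ ⊆ ℝⁿ`. -/
def Gpos (n : ℕ) : Set (Fin n → ℝ) := {lam | ∀ i, 0 < lam i}

/-- Structural conditions on the cone `Γ`. -/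
structure ConeData (n : ℕ) (Γ : Set (Fin n → ℝ)) : Prop where
  isOpen : IsOpen Γ
  convex : Convex ℝ Γ
  cone : ∀ lam ∈ Γ, ∀ t : ℝ, 0 < t → t • lam ∈ Γ
  symm : ∀ σ : Equiv.Perm (Fin n), ∀ lam ∈ Γ, (lam ∘ σ) ∈ Γ
  proper : Γ ≠ Set.univ
  pos_subset : Gpos n ⊆ Γ

/-- Structural conditions (C1), (C3) and smoothness/symmetry on the operator `f`. -/
structure OperatorData (n : ℕ) (Γ : Set (Fin n → ℝ)) (f : (Fin n → ℝ) → ℝ) : Prop where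
  smooth : ContDiffOn ℝ (⊤ : ℕ∞) f Γ
  symm : ∀ σ : Equiv.Perm (Fin n), ∀ lam ∈ Γ, f (lam ∘ σ) = f lam
  deriv_pos : ∀ lam ∈ Γ, ∀ i : Fin n, 0 < fderiv ℝ f lam (Pi.single i 1)
  concave : ConcaveOn ℝ Γ f
  rays : ∀ σ : ℝ, (∃ μ ∈ Γ, σ < f μ) → ∀ lam ∈ Γ, ∀ᶠ t : ℝ in atTop, σ < f (t • lam)

/-- `σ₀` dominates the boundary values of `f`: for every `lam₀ ∈ ∂Γ`,
eventually along `Γ` near `lam₀` one has `f < σ₀`.  This encodes `sup_{∂Γ} f ≤ σ₀`. -/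
def BoundaryBound (n : ℕ) (Γ : Set (Fin n → ℝ)) (f : (Fin n → ℝ) → ℝ) (σ₀ : ℝ) : Prop :=
  ∀ lam₀ ∈ frontier Γ, ∀ᶠ lam in 𝓝[Γ] lam₀, f lam < σ₀

/-- The superlevel set `Γ^σ = {λ ∈ Γ | f λ > σ}`. -/
def upSet (n : ℕ) (Γ : Set (Fin n → ℝ)) (f : (Fin n → ℝ) → ℝ) (σ : ℝ) : Set (Fin n → ℝ) :=
  {lam | lam ∈ Γ ∧ σ < f lam}

/-- The `C`-subsolution condition at one point: `(lam + Γₙ) ∩ ∂Γ^σ` is bounded. -/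
def CSubsolAt (n : ℕ) (Γ : Set (Fin n → ℝ)) (f : (Fin n → ℝ) → ℝ)
    (lam : Fin n → ℝ) (σ : ℝ) : Prop :=
  Bornology.IsBounded
    {μ : Fin n → ℝ | (∃ ν ∈ Gpos n, μ = lam + ν) ∧ μ ∈ frontier (upSet n Γ f σ)}

/-- `ℤ^{4n}`-periodicity: functions on the torus `ℍⁿ/ℤ^{4n}`. -/
def ZPeriodic {n : ℕ} (u : QS n → ℝ) : Prop :=
  ∀ (x : QS n) (k : Fin n × Fin 4 → ℤ), u (fun i => x i + (k i : ℝ)) = u x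

/-- `ℤ^{4n}`-periodicity for matrix-valued fields. -/
def ZPeriodicM {n : ℕ} (Ω : QS n → Matrix (Fin n) (Fin n) Quat) : Prop :=
  ∀ (x : QS n) (k : Fin n × Fin 4 → ℤ), Ω (fun i => x i + (k i : ℝ)) = Ω x

/-- Entrywise smoothness of a matrix-valued field. -/
def SmoothM {n : ℕ} (Ω : QS n → Matrix (Fin n) (Fin n) Quat) : Prop :=
  ∀ r s, ContDiff ℝ (⊤ : ℕ∞) (fun x => Ω x r s)

/-- `u` is a `C`-subsolution of `f(λ(Ω + Hess_ℍ u)) = h` (flat hyperkähler metric). -/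
def CSubsolution (n : ℕ) (Γ : Set (Fin n → ℝ)) (f : (Fin n → ℝ) → ℝ)
    (Ω : QS n → Matrix (Fin n) (Fin n) Quat) (h : QS n → ℝ) (u : QS n → ℝ) : Prop :=
  ∀ x, ∃ lam, HasEigenvalues (Ω x + qHess n u x) lam ∧ CSubsolAt n Γ f lam (h x)

/-- `φ` is a `Γ`-admissible solution of `f(λ(Ω + Hess_ℍ φ)) = h` (flat metric). -/
def AdmissibleSolution (n : ℕ) (Γ : Set (Fin n → ℝ)) (f : (Fin n → ℝ) → ℝ)
    (Ω : QS n → Matrix (Fin n) (Fin n) Quat) (h : QS n → ℝ) (φ : QS n → ℝ) : Prop :=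
  ∀ x, ∃ lam, HasEigenvalues (Ω x + qHess n φ x) lam ∧ lam ∈ Γ ∧ f lam = h x

/-- `g` is a hyperhermitian metric: pointwise hyperhermitian and positive definite. -/
def IsQMetric {n : ℕ} (g : QS n → Matrix (Fin n) (Fin n) Quat) : Prop :=
  ∀ x, IsHyperhermitian (g x) ∧
    ∀ v : Fin n → Quat, v ≠ 0 → 0 < (∑ r, ∑ s, star (v r) * g x r s * v s).re

/-- `u` is a `C`-subsolution of `f(λ_g(Ω + Hess_ℍ u)) = h`. -/
def CSubsolutionG (n : ℕ) (Γ : Set (Fin n → ℝ)) (f : (Fin n → ℝ) → ℝ)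
    (g Ω : QS n → Matrix (Fin n) (Fin n) Quat) (h : QS n → ℝ) (u : QS n → ℝ) : Prop :=
  ∀ x, ∃ lam, HasEigenvaluesRel (g x) (Ω x + qHess n u x) lam ∧ CSubsolAt n Γ f lam (h x)

/-- `φ` is a `Γ`-admissible solution of `f(λ_g(Ω + Hess_ℍ φ)) = h`. -/
def AdmissibleSolutionG (n : ℕ) (Γ : Set (Fin n → ℝ)) (f : (Fin n → ℝ) → ℝ)
    (g Ω : QS n → Matrix (Fin n) (Fin n) Quat) (h : QS n → ℝ) (φ : QS n → ℝ) : Prop :=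
  ∀ x, ∃ lam, HasEigenvaluesRel (g x) (Ω x + qHess n φ x) lam ∧ lam ∈ Γ ∧ f lam = h x

/-- Fundamental domain for the torus `ℍⁿ/ℤ^{4n}`. -/
def unitCube (n : ℕ) : Set (QS n) := {x | ∀ i, 0 ≤ x i ∧ x i < 1}

/-- Elementary symmetric polynomial `σ_k`. -/
def esymm (n k : ℕ) (lam : Fin n → ℝ) : ℝ :=
  ∑ s ∈ Finset.powersetCard k Finset.univ, ∏ i ∈ s, lam i

/-- The `k`-positive cone `Γ_k`. -/
def Gk (n k : ℕ) : Set (Fin n → ℝ) :=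
  {lam | ∀ j, 1 ≤ j → j ≤ k → 0 < esymm n j lam}

/-- Viscosity `Γ`-subsolution on `U`. -/
def ViscSubsolution (n : ℕ) (Γ : Set (Fin n → ℝ)) (U : Set (QS n)) (u : QS n → ℝ) : Prop :=
  ∀ ψ : QS n → ℝ, ContDiff ℝ 2 ψ → ∀ p ∈ U, IsLocalMaxOn (fun x => u x - ψ x) U p →
    ∃ lam, HasEigenvalues (qHess n ψ p) lam ∧ lam ∈ closure Γ

/-- Viscosity `Γ`-supersolution on `U`. -/
def ViscSupersolution (n : ℕ) (Γ : Set (Fin n → ℝ)) (U : Set (QS n)) (u : QS n → ℝ) : Prop :=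
  ∀ ψ : QS n → ℝ, ContDiff ℝ 2 ψ → ∀ p ∈ U, IsLocalMinOn (fun x => u x - ψ x) U p →
    ∃ lam, HasEigenvalues (qHess n ψ p) lam ∧ lam ∉ Γ

/-- Viscosity `Γ`-solution on `U`. -/
def ViscSolution (n : ℕ) (Γ : Set (Fin n → ℝ)) (U : Set (QS n)) (u : QS n → ℝ) : Prop :=
  ViscSubsolution n Γ U u ∧ ViscSupersolution n Γ U u
/-- The table of real components defining the real representation `ι` of `ℍ^{n×n}`:
`ι(X)` has `(p,q)` block with entries `qtbl p q (X r s)`. -/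
def qtbl : Fin 4 → Fin 4 → Quat → ℝ :=
  ![![fun x => x.re,   fun x => x.imI,  fun x => x.imJ,  fun x => x.imK],
    ![fun x => -x.imI, fun x => x.re,   fun x => -x.imK, fun x => x.imJ],
    ![fun x => -x.imJ, fun x => x.imK,  fun x => x.re,   fun x => -x.imI],
    ![fun x => -x.imK, fun x => -x.imJ, fun x => x.imI,  fun x => x.re]]

/-- The real representation `ι : ℍ^{n×n} → ℝ^{4n×4n}`. -/
def iotaM (n : ℕ) (X : Matrix (Fin n) (Fin n) Quat) :
    Matrix (Fin 4 × Fin n) (Fin 4 × Fin n) ℝ :=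
  Matrix.of fun pr qs => qtbl pr.1 qs.1 (X pr.2 qs.2)

def itbl : Matrix (Fin 4) (Fin 4) ℝ := !![0,-1,0,0; 1,0,0,0; 0,0,0,-1; 0,0,1,0]
def jtbl : Matrix (Fin 4) (Fin 4) ℝ := !![0,0,-1,0; 0,0,0,1; 1,0,0,0; 0,-1,0,0]
def ktbl : Matrix (Fin 4) (Fin 4) ℝ := !![0,0,0,-1; 0,0,-1,0; 0,1,0,0; 1,0,0,0]

/-- The standard complex structure `I₀` on `ℝ^{4n}` in block form. -/
def I0 (n : ℕ) : Matrix (Fin 4 × Fin n) (Fin 4 × Fin n) ℝ :=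
  Matrix.of fun pr qs => if pr.2 = qs.2 then itbl pr.1 qs.1 else 0

/-- The standard complex structure `J₀` on `ℝ^{4n}` in block form. -/
def J0 (n : ℕ) : Matrix (Fin 4 × Fin n) (Fin 4 × Fin n) ℝ :=
  Matrix.of fun pr qs => if pr.2 = qs.2 then jtbl pr.1 qs.1 else 0

/-- The standard complex structure `K₀` on `ℝ^{4n}` in block form. -/
def K0 (n : ℕ) : Matrix (Fin 4 × Fin n) (Fin 4 × Fin n) ℝ :=
  Matrix.of fun pr qs => if pr.2 = qs.2 then ktbl pr.1 qs.1 else 0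

/-- The subspace `V = {H | I₀HI₀ = J₀HJ₀ = K₀HK₀ = -H}` of `ℝ^{4n×4n}`. -/
def Vset (n : ℕ) : Set (Matrix (Fin 4 × Fin n) (Fin 4 × Fin n) ℝ) :=
  {H | I0 n * H * I0 n = -H ∧ J0 n * H * J0 n = -H ∧ K0 n * H * K0 n = -H}

/-- The projection `p(H) = (1/4)(H - I₀HI₀ - J₀HJ₀ - K₀HK₀)`. -/
def projV (n : ℕ) (H : Matrix (Fin 4 × Fin n) (Fin 4 × Fin n) ℝ) :
    Matrix (Fin 4 × Fin n) (Fin 4 × Fin n) ℝ :=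
  (4 : ℝ)⁻¹ • (H - I0 n * H * I0 n - J0 n * H * J0 n - K0 n * H * K0 n)

/-- The matrix `Ω₁ + (1/(n-1))((Δφ)·Id - Hess_ℍ φ)` of the quaternionic Monge-Ampère
equation for `(n-1)`-quaternionic plurisubharmonic functions. -/
def Bmat (n : ℕ) (Ω₁ : QS n → Matrix (Fin n) (Fin n) Quat) (φ : QS n → ℝ) (x : QS n) :
    Matrix (Fin n) (Fin n) Quat :=
  Ω₁ x + ((n : ℝ) - 1)⁻¹ • (qLap n φ x • (1 : Matrix (Fin n) (Fin n) Quat) - qHess n φ x)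

/-- The linear map `T(λ)_k = (1/(n-1)) Σ_{i ≠ k} λ_i`. -/
def Tmap (n : ℕ) (lam : Fin n → ℝ) : Fin n → ℝ :=
  fun k => ((n : ℝ) - 1)⁻¹ * ∑ i ∈ Finset.univ.erase k, lam i

/-- Inclusion `ℍ^m → ℍ^{m+1}`, extending by `0` in the last quaternionic variable. -/
def qext (m : ℕ) (x : QS m) : QS (m + 1) :=
  fun ip => if h : (ip.1 : ℕ) < m then x (⟨ip.1, h⟩, ip.2) else 0

/-- The space of real components of a quaternionic `n×n` matrix. -/
abbrev MSpace (n : ℕ) : Type := Fin n → Fin n → Fin 4 → ℝ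

/-- Real components of a quaternionic matrix. -/
def toComp {n : ℕ} (M : Matrix (Fin n) (Fin n) Quat) : MSpace n :=
  fun r s => ![(M r s).re, (M r s).imI, (M r s).imJ, (M r s).imK]

/-- The quaternionic partial derivative `F^{rs} = ∂F/∂A⁰_{rs} + (∂F/∂A¹_{rs})i
 + (∂F/∂A²_{rs})j + (∂F/∂A³_{rs})k`. -/
def qpartial {n : ℕ} (F : MSpace n → ℝ) (A : MSpace n) (r s : Fin n) : Quat :=
  ∑ p : Fin 4, (fderiv ℝ F A (Pi.single r (Pi.single s (Pi.single p (1 : ℝ))))) • qunit p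

/-- every proper symmetric open convex cone containing the positive
orthant is contained in the half-space `{λ | λ₁ + ⋯ + λₙ > 0}`. -/
theorem statement17 (n : ℕ) (Γ : Set (Fin n → ℝ)) (hΓ : ConeData n Γ) :
    Γ ⊆ {lam : Fin n → ℝ | 0 < ∑ i, lam i} := by
  intro lam hlam
  simp only [Set.mem_setOf_eq]
  by_contra hs
  push_neg at hs
  apply hΓ.proper
  rcases Nat.eq_zero_or_pos n with hn | hn
  · ext x
    simp only [Set.mem_univ, iff_true]
    have hx : x = lam := by subst hn; funext i; exact i.elim0
    rwa [hx]
  have hn' : (0 : ℝ) < n := by exact_mod_cast hn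
  set N : ℕ := Fintype.card (Equiv.Perm (Fin n)) with hN
  have hNpos : (0 : ℝ) < N := by exact_mod_cast Fintype.card_pos
  set S : Fin n → ℝ := fun i => ∑ σ : Equiv.Perm (Fin n), lam (σ i) with hSdef
  have hSeq : ∀ i j : Fin n, S i = S j := by
    intro i j
    refine Fintype.sum_bijective (· * Equiv.swap j i)
      (Group.mulRight_bijective _) _ _ ?_
    intro σ
    simp [Equiv.Perm.mul_apply]
  have hsumS : ∑ j, S j = (N : ℝ) * ∑ i, lam i := by
    rw [hSdef]
    rw [Finset.sum_comm]
    rw [Finset.sum_congr rfl (fun σ _ => Equiv.sum_comp σ lam)]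
    simp [Finset.sum_const, hN, mul_comm]
  have hSle : ∀ i, S i ≤ 0 := by
    intro i
    have h1 : (n : ℝ) * S i = ∑ j, S j := by
      rw [Finset.sum_congr rfl (fun j _ => hSeq j i), Finset.sum_const,
        Finset.card_univ, Fintype.card_fin, nsmul_eq_mul]
    have h2 : (N : ℝ) * ∑ i, lam i ≤ 0 :=
      mul_nonpos_of_nonneg_of_nonpos (le_of_lt hNpos) hs
    nlinarith [h1, hsumS]
  set μ : Fin n → ℝ := ∑ σ : Equiv.Perm (Fin n), ((N : ℝ))⁻¹ • (lam ∘ σ) with hμdef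
  have hμΓ : μ ∈ Γ := by
    refine hΓ.convex.sum_mem (fun σ _ => by positivity) ?_
      (fun σ _ => hΓ.symm σ lam hlam)
    simp only [Finset.sum_const, Finset.card_univ, ← hN, nsmul_eq_mul]
    field_simp
  have hμval : ∀ i, μ i = (N : ℝ)⁻¹ * S i := by
    intro i
    rw [hμdef, hSdef]
    simp [Finset.sum_apply, Function.comp, Finset.mul_sum]
  have hμle : ∀ i, μ i ≤ 0 := fun i => by
    rw [hμval i]
    exact mul_nonpos_of_nonneg_of_nonpos (by positivity) (hSle i)
  have hopen : ∀ᶠ t : ℝ in 𝓝 0, (μ - t • fun _ : Fin n => (1 : ℝ)) ∈ Γ := by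
    have hc : Continuous fun t : ℝ => μ - t • fun _ : Fin n => (1 : ℝ) :=
      continuous_const.sub (continuous_id.smul continuous_const)
    have h0 : μ - (0 : ℝ) • (fun _ : Fin n => (1 : ℝ)) ∈ Γ := by simpa using hμΓ
    exact hc.continuousAt.eventually_mem (hΓ.isOpen.mem_nhds h0)
  rcases Metric.eventually_nhds_iff.mp hopen with ⟨ε, hε, hball⟩
  set t : ℝ := ε / 2 with htdef
  have ht : 0 < t := by positivity
  have hνΓ : (μ - t • fun _ : Fin n => (1 : ℝ)) ∈ Γ := by
    apply hball
    rw [Real.dist_eq]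
    rw [sub_zero, abs_of_pos ht]
    linarith
  set ν : Fin n → ℝ := μ - t • fun _ : Fin n => (1 : ℝ) with hνdef
  have hν : ∀ i, ν i ≤ -t := by
    intro i
    have := hμle i
    simp only [hνdef, Pi.sub_apply, Pi.smul_apply, smul_eq_mul, mul_one]
    linarith
  ext x
  simp only [Set.mem_univ, iff_true]
  set T : ℝ := (1 + ∑ i, |2 * x i|) / t with hTdef
  have hTpos : 0 < T := by
    apply div_pos _ ht
    positivity
  have hTt : T * t = 1 + ∑ i, |2 * x i| := by
    rw [hTdef, div_mul_cancel₀ _ (ne_of_gt ht)]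
  have hzΓ : T • ν ∈ Γ := hΓ.cone ν hνΓ T hTpos
  set y : Fin n → ℝ := fun i => 2 * x i - T * ν i with hydef
  have hyG : y ∈ Gpos n := by
    intro i
    have h1 : T * ν i ≤ T * (-t) := mul_le_mul_of_nonneg_left (hν i) (le_of_lt hTpos)
    have h2 : |2 * x i| ≤ ∑ j, |2 * x j| :=
      Finset.single_le_sum (f := fun j => |2 * x j|) (fun j _ => abs_nonneg _) (Finset.mem_univ i)
    have h3 := neg_abs_le (2 * x i)
    simp only [hydef]
    nlinarith
  have hyΓ : y ∈ Γ := hΓ.pos_subset hyG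
  have hconv : ((1 : ℝ) / 2) • y + ((1 : ℝ) / 2) • (T • ν) ∈ Γ :=
    hΓ.convex hyΓ hzΓ (by norm_num) (by norm_num) (by norm_num)
  have hxeq : x = ((1 : ℝ) / 2) • y + ((1 : ℝ) / 2) • (T • ν) := by
    funext i
    simp only [Pi.add_apply, Pi.smul_apply, smul_eq_mul, hydef]
    ring
  rwa [hxeq]
end
end

section
/- Let n ≥ 2, let T : ℝ^n → ℝ^n be the linear map T(λ)_k = (1/(n−1))·Σ_{i≠k} λ_i, and set Γ = T^{−1}(Γ_n) and f(λ) = log(∏_{k=1}^n T(λ)_k) for λ ∈ Γ. Then: Γ is an open convex cone in ℝ^n with vertex at the origin, proper, invariant under permutations of coordinates, and contains Γ_n; f is smooth and symmetric on Γ with ∂f/∂λ_i > 0 for each i; f is concave on Γ; f(λ) → −∞ as λ approaches any boundary point of Γ (so sup_{∂Γ} f = −∞); and for every λ ∈ Γ, f(tλ) → +∞ as t → ∞. -/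
noncomputable section

open Filter Topology Metric Matrix MeasureTheory
open scoped Topology

section Statement18Aux

open Filter Topology

/-- The linear map `T` coordinate `k`, as a continuous linear map. -/
def Tlin (n : ℕ) (k : Fin n) : (Fin n → ℝ) →L[ℝ] ℝ :=
  ((n : ℝ) - 1)⁻¹ • ∑ i ∈ Finset.univ.erase k, (ContinuousLinearMap.proj i : (Fin n → ℝ) →L[ℝ] ℝ)

lemma Tlin_apply (n : ℕ) (k : Fin n) (lam : Fin n → ℝ) :
    Tlin n k lam = Tmap n lam k := by
  simp [Tlin, Tmap, ContinuousLinearMap.sum_apply]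

lemma Tlin_single (n : ℕ) (k i : Fin n) :
    Tlin n k (Pi.single i 1) = if i ∈ Finset.univ.erase k then ((n : ℝ) - 1)⁻¹ else 0 := by
  simp only [Tlin, ContinuousLinearMap.smul_apply, ContinuousLinearMap.sum_apply,
    ContinuousLinearMap.proj_apply, smul_eq_mul]
  simp_rw [Pi.single_apply, Finset.sum_ite_eq']
  split <;> simp

lemma Tmap_smul' (n : ℕ) (t : ℝ) (lam : Fin n → ℝ) (k : Fin n) :
    Tmap n (t • lam) k = t * Tmap n lam k := by
  simp only [Tmap, Pi.smul_apply, smul_eq_mul, ← Finset.mul_sum]; ring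

lemma Tmap_perm' (n : ℕ) (σ : Equiv.Perm (Fin n)) (lam : Fin n → ℝ) (k : Fin n) :
    Tmap n (lam ∘ σ) k = Tmap n lam (σ k) := by
  unfold Tmap
  congr 1
  rw [show ∑ i ∈ Finset.univ.erase k, (lam ∘ σ) i
      = ∑ j ∈ (Finset.univ.erase k).image σ, lam j from
    (Finset.sum_image (fun a _ b _ h => σ.injective h)).symm]
  congr 1
  ext j
  simp only [Finset.mem_image, Finset.mem_erase, Finset.mem_univ, and_true]
  constructor
  · rintro ⟨i, hi, rfl⟩; exact fun h => hi (σ.injective h)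
  · intro hj; exact ⟨σ.symm j, fun h => hj (by rw [← h, Equiv.apply_symm_apply]), by simp⟩

lemma concaveOn_finset_sum' {E : Type*} [AddCommGroup E] [Module ℝ E]
    {ι : Type*} (t : Finset ι) {s : Set E} (hs : Convex ℝ s) {f : ι → E → ℝ}
    (h : ∀ i ∈ t, ConcaveOn ℝ s (f i)) :
    ConcaveOn ℝ s (fun x => ∑ i ∈ t, f i x) := by
  classical
  induction t using Finset.cons_induction with
  | empty => simpa using concaveOn_const 0 hs
  | cons a t ha ih =>
    simp only [Finset.sum_cons]
    exact (h a (Finset.mem_cons_self a t)).add (ih (fun i hi => h i (Finset.mem_cons_of_mem hi)))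

end Statement18Aux

/-- the operator of the quaternionic Monge–Ampère equation for
`(n-1)`-quaternionic plurisubharmonic functions, `f = log ∏ₖ T(λ)ₖ` on
`Γ = T⁻¹(Γₙ)`, satisfies all the structural conditions (C1)–(C3); moreover
`f → -∞` at `∂Γ` and `f(tλ) → +∞` as `t → ∞` for every `λ ∈ Γ`. -/
theorem statement18 (n : ℕ) (hn : 2 ≤ n)
    (Γ : Set (Fin n → ℝ)) (hΓdef : Γ = Tmap n ⁻¹' Gpos n)
    (f : (Fin n → ℝ) → ℝ) (hfdef : f = fun lam => Real.log (∏ k, Tmap n lam k)) :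
    ConeData n Γ ∧ OperatorData n Γ f ∧
    (∀ lam₀ ∈ frontier Γ, Tendsto f (𝓝[Γ] lam₀) atBot) ∧
    (∀ lam ∈ Γ, Tendsto (fun t : ℝ => f (t • lam)) atTop atTop) := by
  have hn1 : (0:ℝ) < (n:ℝ) - 1 := by
    have : (2:ℝ) ≤ (n:ℝ) := by exact_mod_cast hn
    linarith
  have hcard : 1 < Fintype.card (Fin n) := by simp; omega
  have hmem : ∀ lam, lam ∈ Γ ↔ ∀ k, 0 < Tmap n lam k := by
    intro lam; rw [hΓdef]; exact Iff.rfl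
  have hprod : ∀ lam ∈ Γ, 0 < ∏ k, Tmap n lam k :=
    fun lam h => Finset.prod_pos (fun k _ => (hmem lam).1 h k)
  have hTfun : ∀ k : Fin n, (fun lam => Tmap n lam k) = ⇑(Tlin n k) :=
    fun k => funext fun lam => (Tlin_apply n k lam).symm
  have hTc : ∀ k : Fin n, Continuous (fun lam => Tmap n lam k) :=
    fun k => (hTfun k).symm ▸ (Tlin n k).continuous
  have hΓi : Γ = ⋂ k, (fun lam => Tmap n lam k) ⁻¹' Set.Ioi 0 := by
    ext lam; simp [hΓdef, Gpos, Set.mem_iInter]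
  have hopen : IsOpen Γ := by
    rw [hΓi]; exact isOpen_iInter_of_finite fun k => isOpen_Ioi.preimage (hTc k)
  have hconv : Convex ℝ Γ := by
    rw [hΓi]
    refine convex_iInter fun k => ?_
    have hlin : IsLinearMap ℝ (fun lam => Tmap n lam k) :=
      { map_add := fun x y => by simp only [← Tlin_apply]; exact map_add _ x y
        map_smul := fun c x => by simp only [← Tlin_apply]; exact map_smul _ c x }
    exact convex_halfSpace_gt hlin 0
  have hcone : ∀ lam ∈ Γ, ∀ t : ℝ, 0 < t → t • lam ∈ Γ := by
    intro lam hl t ht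
    rw [hmem]; intro k; rw [Tmap_smul']
    exact mul_pos ht ((hmem lam).1 hl k)
  have hsymmΓ : ∀ σ : Equiv.Perm (Fin n), ∀ lam ∈ Γ, (lam ∘ σ) ∈ Γ := by
    intro σ lam hl
    rw [hmem]; intro k; rw [Tmap_perm']
    exact (hmem lam).1 hl (σ k)
  have hproper : Γ ≠ Set.univ := by
    intro h
    have hk : (0:ℕ) < n := by omega
    set k : Fin n := ⟨0, hk⟩
    have hmem' : (fun _ => (-1:ℝ)) ∈ Γ := h ▸ Set.mem_univ _
    have h1 := (hmem _).1 hmem' k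
    rw [Tmap] at h1
    simp only [Finset.sum_const, Finset.card_erase_of_mem (Finset.mem_univ k),
      Finset.card_univ, Fintype.card_fin, nsmul_eq_mul] at h1
    have hcast : ((n - 1 : ℕ) : ℝ) = (n:ℝ) - 1 := by
      have : 1 ≤ n := by omega
      push_cast [this]; ring
    rw [hcast] at h1
    have : ((n:ℝ) - 1)⁻¹ * ((n:ℝ) - 1) = 1 := inv_mul_cancel₀ (ne_of_gt hn1)
    nlinarith
  have hpos_sub : Gpos n ⊆ Γ := by
    intro lam hl
    rw [hmem]; intro k
    obtain ⟨j, hj⟩ := Fintype.exists_ne_of_one_lt_card hcard k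
    refine mul_pos (inv_pos.2 hn1) (Finset.sum_pos (fun i _ => hl i) ⟨j, ?_⟩)
    exact Finset.mem_erase.2 ⟨hj, Finset.mem_univ j⟩
  -- smoothness
  have hPc : ContDiff ℝ (⊤:ℕ∞) (fun lam => ∏ k, Tmap n lam k) := by
    apply contDiff_prod
    intro k _
    rw [hTfun k]
    exact (Tlin n k).contDiff
  have hsmooth : ContDiffOn ℝ (⊤:ℕ∞) f Γ := by
    intro x hx
    rw [hfdef]
    exact ((hPc.contDiffAt).log (ne_of_gt (hprod x hx))).contDiffWithinAt
  -- symmetry of f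
  have hfsymm : ∀ σ : Equiv.Perm (Fin n), ∀ lam ∈ Γ, f (lam ∘ σ) = f lam := by
    intro σ lam _
    rw [hfdef]
    simp only
    congr 1
    rw [Finset.prod_congr rfl (fun k _ => Tmap_perm' n σ lam k)]
    exact Equiv.prod_comp σ (Tmap n lam)
  -- f = g on Γ
  set g : (Fin n → ℝ) → ℝ := fun lam => ∑ k, Real.log (Tmap n lam k) with hg
  have hfg : ∀ lam ∈ Γ, f lam = g lam := by
    intro lam hl
    rw [hfdef]
    exact Real.log_prod (fun k _ => ne_of_gt ((hmem lam).1 hl k))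
  have hgderiv : ∀ lam ∈ Γ, HasFDerivAt g (∑ k, (Tmap n lam k)⁻¹ • Tlin n k) lam := by
    intro lam hl
    have h1 : ∀ k : Fin n, HasFDerivAt (fun x => Real.log (Tlin n k x))
        ((Tmap n lam k)⁻¹ • Tlin n k) lam := by
      intro k
      have := (Real.hasDerivAt_log (x := Tlin n k lam)
        (by rw [Tlin_apply]; exact ne_of_gt ((hmem lam).1 hl k))).comp_hasFDerivAt lam
        ((Tlin n k).hasFDerivAt)
      rw [Tlin_apply] at this
      exact this
    have := HasFDerivAt.fun_sum (fun k (_ : k ∈ Finset.univ) => h1 k)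
    suffices e : g = fun y => ∑ i, Real.log (Tlin n i y) by rw [e]; exact this
    funext x
    simp only [hg, Tlin_apply]
  have hderiv_pos : ∀ lam ∈ Γ, ∀ i : Fin n, 0 < fderiv ℝ f lam (Pi.single i 1) := by
    intro lam hl i
    have hev : f =ᶠ[nhds lam] g :=
      Filter.eventually_of_mem (hopen.mem_nhds hl) hfg
    rw [hev.fderiv_eq, (hgderiv lam hl).fderiv]
    simp only [ContinuousLinearMap.sum_apply, ContinuousLinearMap.smul_apply, smul_eq_mul,
      Tlin_single]
    apply Finset.sum_pos'
    · intro k _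
      split
      · exact mul_nonneg (inv_nonneg.2 ((hmem lam).1 hl k).le) (inv_nonneg.2 hn1.le)
      · simp
    · obtain ⟨k, hk⟩ := Fintype.exists_ne_of_one_lt_card hcard i
      refine ⟨k, Finset.mem_univ k, ?_⟩
      rw [if_pos (Finset.mem_erase.2 ⟨hk.symm, Finset.mem_univ i⟩)]
      exact mul_pos (inv_pos.2 ((hmem lam).1 hl k)) (inv_pos.2 hn1)
  -- concavity
  have hgconc : ConcaveOn ℝ Γ g := by
    apply concaveOn_finset_sum' _ hconv
    intro k _
    have h1 := (strictConcaveOn_log_Ioi.concaveOn).comp_affineMap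
      ((Tlin n k).toLinearMap.toAffineMap)
    have h2 : ConcaveOn ℝ Γ (Real.log ∘ ⇑((Tlin n k).toLinearMap.toAffineMap)) := by
      refine h1.subset (fun x hx => ?_) hconv
      simp only [Set.mem_preimage, LinearMap.coe_toAffineMap, ContinuousLinearMap.coe_coe,
        Tlin_apply, Set.mem_Ioi]
      exact (hmem x).1 hx k
    have : (Real.log ∘ ⇑((Tlin n k).toLinearMap.toAffineMap))
        = fun lam => Real.log (Tmap n lam k) := by
      funext x
      simp [Tlin_apply]
    rwa [this] at h2
  have hfconc : ConcaveOn ℝ Γ f := by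
    refine ⟨hconv, fun x hx y hy a b ha hb hab => ?_⟩
    rw [hfg x hx, hfg y hy, hfg _ (hconv hx hy ha hb hab)]
    exact hgconc.2 hx hy ha hb hab
  -- rays to +infinity
  have hray : ∀ lam ∈ Γ, Tendsto (fun t : ℝ => f (t • lam)) atTop atTop := by
    intro lam hl
    have heq : ∀ᶠ t : ℝ in atTop, (n : ℝ) * Real.log t + f lam = f (t • lam) := by
      filter_upwards [eventually_gt_atTop (0:ℝ)] with t ht
      rw [hfdef]
      simp only
      rw [Finset.prod_congr rfl (fun k _ => Tmap_smul' n t lam k),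
        Finset.prod_mul_distrib, Finset.prod_const, Finset.card_univ, Fintype.card_fin,
        Real.log_mul (pow_ne_zero n (ne_of_gt ht)) (ne_of_gt (hprod lam hl)),
        Real.log_pow]
    have h1 : Tendsto (fun t : ℝ => (n : ℝ) * Real.log t + f lam) atTop atTop :=
      (Real.tendsto_log_atTop.const_mul_atTop (by positivity)).atTop_add tendsto_const_nhds
    exact h1.congr' heq
  -- boundary behaviour
  have hbdy : ∀ lam₀ ∈ frontier Γ, Tendsto f (𝓝[Γ] lam₀) atBot := by
    intro lam₀ hfr
    have hcl : lam₀ ∈ closure Γ := hfr.1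
    have hnotin : lam₀ ∉ Γ := by
      rw [hopen.frontier_eq] at hfr
      exact hfr.2
    have hnonneg : ∀ k, 0 ≤ Tmap n lam₀ k := by
      intro k
      have hsub : Γ ⊆ {x | 0 ≤ Tmap n x k} := fun x hx => ((hmem x).1 hx k).le
      have hclosed : IsClosed {x | 0 ≤ Tmap n x k} :=
        isClosed_le continuous_const (hTc k)
      exact closure_minimal hsub hclosed hcl
    obtain ⟨k₀, hk₀⟩ : ∃ k₀, Tmap n lam₀ k₀ = 0 := by
      by_contra hcon
      push_neg at hcon
      exact hnotin ((hmem lam₀).2 fun k => lt_of_le_of_ne (hnonneg k) (Ne.symm (hcon k)))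
    have hP0 : (∏ k, Tmap n lam₀ k) = 0 :=
      Finset.prod_eq_zero (Finset.mem_univ k₀) hk₀
    have hPtend : Tendsto (fun lam => ∏ k, Tmap n lam k) (𝓝[Γ] lam₀) (𝓝[>] (0:ℝ)) := by
      rw [tendsto_nhdsWithin_iff]
      constructor
      · have := (hPc.continuous.tendsto lam₀).mono_left (nhdsWithin_le_nhds (s := Γ))
        rwa [hP0] at this
      · filter_upwards [self_mem_nhdsWithin] with x hx
        exact hprod x hx
    have := Real.tendsto_log_nhdsGT_zero.comp hPtend
    rw [hfdef]
    exact this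
  refine ⟨⟨hopen, hconv, hcone, hsymmΓ, hproper, hpos_sub⟩,
    ⟨hsmooth, hfsymm, hderiv_pos, hfconc, ?_⟩, hbdy, hray⟩
  intro σ₀ _ lam hl
  exact (hray lam hl).eventually_gt_atTop σ₀
end
end
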